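/- Let n ≥ 3, 2 ≤ i_1 ≤ n−2, i_1 + 1 ≤ t_2 ≤ n−1, and i_2 with i_2 + t_2 > n and i_2 ≥ n − t_2 + i_1 (so i_2 − i_1 ≥ n − t_2 ≥ 1). Define C_1 = ... = C_{i_1} = C_n = [n], C_{i_1+1} = ... = C_{i_1+n−i_2−1} = [n] \ ({t_2+1,...,n} ∪ {1,...,i_2+t_2−n}), C_{i_1+n−i_2} = ... = C_{n−1} = [n] \ [i_1]. Then {Σ_{k=1}^n e_{j_k} : j_k ∈ C_k} = {α ∈ ℕ^n : |α| = n, α_1 + ... + α_{i_1} ≤ i_1 + 1, Σ_{k=1}^{i_2+t_2−n} α_k + Σ_{k=t_2+1}^{n} α_k ≤ i_2 + 1}. -/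

import Mathlib

open Finset

lemma aux_count {n : ℕ} (f : Fin n → Fin n) (m : Fin n) :
    (∑ k, Pi.single (f k) (1:ℕ) : Fin n → ℕ) m = (Finset.univ.filter fun k => f k = m).card := by
  rw [Finset.sum_apply, Finset.card_filter]
  exact Finset.sum_congr rfl fun k _ => by
    rw [Pi.single_apply]; exact if_congr eq_comm rfl rfl

lemma aux_sum {n : ℕ} (f : Fin n → Fin n) (S : Finset (Fin n)) :
    ∑ m ∈ S, (∑ k, Pi.single (f k) (1:ℕ) : Fin n → ℕ) m
      = (Finset.univ.filter fun k => f k ∈ S).card := by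
  rw [Finset.card_eq_sum_card_fiberwise (f := f) (t := S)
    (by intro x hx; simpa using (Finset.mem_filter.mp hx).2)]
  refine Finset.sum_congr rfl fun m hm => ?_
  rw [aux_count]
  congr 1
  ext k
  simp only [Finset.mem_filter, Finset.mem_univ, true_and, Finset.filter_filter]
  constructor
  · rintro rfl; exact ⟨hm, rfl⟩
  · rintro ⟨_, rfl⟩; rfl

lemma aux_cardP {n : ℕ} (P : ℕ → Prop) [DecidablePred P] :
    ((Finset.univ : Finset (Fin n)).filter fun k => P k.val).card
      = ((Finset.range n).filter P).card := by
  apply Finset.card_nbij (fun k => k.val)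
  · intro k hk
    simp only [Finset.mem_coe, Finset.mem_filter, Finset.mem_univ, true_and] at hk
    simp [Finset.mem_filter, Finset.mem_range, k.isLt, hk]
  · intro a _ b _ h; exact Fin.ext h
  · intro x hx
    simp only [Finset.coe_filter, Finset.mem_range, Set.mem_setOf_eq] at hx
    exact ⟨⟨x, hx.1⟩, by simp [hx.2], rfl⟩

lemma aux_backward {n i1 i2 t2 : ℕ} (hn : 3 ≤ n) (h1 : 2 ≤ i1) (h2 : i1 + 2 ≤ n)
    (h3 : i1 + 1 ≤ t2) (h4 : t2 + 1 ≤ n) (h5 : n < i2 + t2) (h6 : n - t2 + i1 ≤ i2)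
    (h7 : i2 + 1 ≤ n)
    (α : Fin n → ℕ) (hs : ∑ k, α k = n)
    (ha : ∑ k ∈ Finset.univ.filter (fun m : Fin n => m.val < i1), α k ≤ i1 + 1)
    (hb : ∑ k ∈ Finset.univ.filter (fun m : Fin n => m.val < i2 + t2 - n ∨ t2 ≤ m.val), α k
            ≤ i2 + 1) :
    ∃ j : Fin n → Fin n,
      (∀ k : Fin n, ¬(k.val < i1 ∨ k.val = n-1) → k.val < i1 + n - i2 - 1 →
        (i2 + t2 - n ≤ (j k).val ∧ (j k).val < t2)) ∧
      (∀ k : Fin n, ¬(k.val < i1 ∨ k.val = n-1) → ¬(k.val < i1 + n - i2 - 1) →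
        i1 ≤ (j k).val) ∧
      α = ∑ k, Pi.single (j k) 1 := by
  -- basic arithmetic facts
  have hf1 : i1 ≤ i2 + t2 - n := by omega
  have hf2 : i1 + 1 ≤ i2 := by omega
  -- the element reordering ρ
  set A : ℕ → ℕ := fun e => if e < i2 + t2 - n then e else if e < i2 then e + n - i2
    else e + t2 - n with hA
  have hAlt : ∀ e, e < n → A e < n := by
    intro e he; simp only [hA]; split_ifs <;> omega
  have hAinj : ∀ e f, e < n → f < n → A e = A f → e = f := by
    intro e f he hf h; simp only [hA] at h; split_ifs at h <;> omega
  set ρ : Fin n → Fin n := fun e => ⟨A e.val, hAlt _ e.isLt⟩ with hρ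
  have hρbij : Function.Bijective ρ :=
    Finite.injective_iff_bijective.mp (fun x y h => Fin.ext (hAinj _ _ x.isLt y.isLt (congrArg Fin.val h)))
  set ρe : Fin n ≃ Fin n := Equiv.ofBijective ρ hρbij with hρe
  have hρe_apply : ∀ x, ρe x = ρ x := fun x => rfl
  -- cumulative sums
  set b : ℕ → ℕ := fun t => if h : t < n then α (ρ ⟨t, h⟩) else 1 with hbdef
  set F : ℕ → ℕ := fun e => ∑ x ∈ Finset.range e, b x with hF
  have hFmono : Monotone F := fun a c hac =>
    Finset.sum_le_sum_of_subset (Finset.range_subset_range.2 hac)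
  have hFn : F n = n := by
    have e1 : F n = ∑ x : Fin n, b x.val := (Fin.sum_univ_eq_sum_range b n).symm
    have e2 : ∀ x : Fin n, b x.val = α (ρe x) := by
      intro x; simp only [hbdef]; rw [dif_pos x.isLt]; rfl
    rw [e1, Finset.sum_congr rfl fun x _ => e2 x, Equiv.sum_comp ρe α, hs]
  have hFnq : ∀ q, F (n + q) = n + q := by
    intro q
    induction q with
    | zero => simpa using hFn
    | succ q ih =>
      rw [show n + (q+1) = (n + q) + 1 by omega]
      simp only [hF] at ih ⊢
      rw [Finset.sum_range_succ, ih]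
      have : b (n + q) = 1 := by simp only [hbdef]; rw [dif_neg (by omega)]
      rw [this]
  have hEx : ∀ p, ∃ e, p < F (e + 1) := by
    intro p
    exact ⟨n + p, by rw [show n + p + 1 = n + (p+1) by omega, hFnq]; omega⟩
  set E : ℕ → ℕ := fun p => Nat.find (hEx p) with hE
  have hE1 : ∀ p, p < F (E p + 1) := fun p => Nat.find_spec (hEx p)
  have hE2 : ∀ p, F (E p) ≤ p := by
    intro p
    rcases Nat.eq_zero_or_pos (E p) with h | h
    · rw [h]; simp [hF]
    · have := Nat.find_min (hEx p) (show E p - 1 < E p by omega)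
      rw [show E p - 1 + 1 = E p by omega] at this
      omega
  have hEge : ∀ p e, F e ≤ p → e ≤ E p := by
    intro p e h
    by_contra hlt
    push_neg at hlt
    have : F (E p + 1) ≤ F e := hFmono (by omega)
    have := hE1 p
    omega
  have hElt : ∀ p, p < n → E p < n := by
    intro p hp
    have : E p ≤ n - 1 := Nat.find_le (by rw [show n - 1 + 1 = n by omega, hFn]; exact hp)
    omega
  have hfiber : ∀ e, e < n → ((Finset.range n).filter fun p => E p = e).card = b e := by
    intro e he
    have hset : ((Finset.range n).filter fun p => E p = e) = Finset.Ico (F e) (F (e+1)) := by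
      ext p
      simp only [Finset.mem_filter, Finset.mem_range, Finset.mem_Ico]
      constructor
      · rintro ⟨hp, rfl⟩; exact ⟨hE2 p, hE1 p⟩
      · rintro ⟨hl, hr⟩
        have h1 : e ≤ E p := hEge p e hl
        have h2 : E p ≤ e := Nat.find_min' (hEx p) hr
        have h3 : p < F n := lt_of_lt_of_le hr (hFmono (by omega))
        rw [hFn] at h3
        exact ⟨h3, by omega⟩
    rw [hset, Nat.card_Ico]
    simp only [hF]
    rw [Finset.sum_range_succ]
    omega
  -- F i1 = sum over low part
  have hFi1 : F i1 = ∑ k ∈ Finset.univ.filter (fun m : Fin n => m.val < i1), α k := by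
    have e0 : (Finset.range n).filter (· < i1) = Finset.range i1 := by
      ext x; simp only [Finset.mem_filter, Finset.mem_range]; omega
    have e1 : F i1 = ∑ x ∈ (Finset.range n).filter (· < i1), b x := by rw [e0]
    rw [e1, Finset.sum_filter, ← Fin.sum_univ_eq_sum_range (fun x => if x < i1 then b x else 0) n,
      Finset.sum_filter]
    refine Finset.sum_congr rfl fun x _ => ?_
    by_cases hx : x.val < i1
    · rw [if_pos hx, if_pos hx]
      simp only [hbdef]
      rw [dif_pos x.isLt]
      congr 1
      apply Fin.ext
      show A x.val = x.val
      simp only [hA]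
      rw [if_pos (by omega)]
    · rw [if_neg hx, if_neg hx]
  -- F i2 = sum over B
  have hFi2 : F i2 = ∑ k ∈ Finset.univ.filter
      (fun m : Fin n => m.val < i2 + t2 - n ∨ t2 ≤ m.val), α k := by
    have e0 : (Finset.range n).filter (· < i2) = Finset.range i2 := by
      ext x; simp only [Finset.mem_filter, Finset.mem_range]; omega
    have e1 : F i2 = ∑ x ∈ (Finset.range n).filter (· < i2), b x := by rw [e0]
    rw [e1, Finset.sum_filter, ← Fin.sum_univ_eq_sum_range (fun x => if x < i2 then b x else 0) n]
    rw [Finset.sum_filter]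
    rw [← Equiv.sum_comp ρe (fun m : Fin n => if m.val < i2 + t2 - n ∨ t2 ≤ m.val then α m else 0)]
    refine Finset.sum_congr rfl fun x _ => ?_
    have hbx : b x.val = α (ρe x) := by
      simp only [hbdef]; rw [dif_pos x.isLt]; rfl
    have hval : (ρe x).val = A x.val := rfl
    by_cases hx : x.val < i2
    · rw [if_pos hx, hbx, if_pos]
      rw [hval]
      simp only [hA]
      split_ifs <;> omega
    · rw [if_neg hx, if_neg]
      rw [hval]
      simp only [hA]
      have hxn := x.isLt
      split_ifs <;> omega
  -- slot reordering τ
  set T : ℕ → ℕ := fun k => if k < i1 then k else if k = n - 1 then i1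
    else if k < i1 + n - i2 - 1 then k + i2 + 1 - i1 else k + i2 + 2 - n with hT
  have hTlt : ∀ k, k < n → T k < n := by
    intro k hk; simp only [hT]; split_ifs <;> omega
  set j : Fin n → Fin n := fun k => ρ ⟨E (T k.val), hElt _ (hTlt _ k.isLt)⟩ with hj
  refine ⟨j, ?_, ?_, ?_⟩
  · -- class 2 indices
    intro k hk1 hk2
    have hTk : T k.val = k.val + i2 + 1 - i1 := by
      simp only [hT]
      rw [if_neg (by omega), if_neg (by omega), if_pos hk2]
    have hple : F i2 ≤ T k.val := by rw [hFi2]; omega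
    have hge : i2 ≤ E (T k.val) := hEge _ _ hple
    have hlt : E (T k.val) < n := hElt _ (hTlt _ k.isLt)
    have : (j k).val = A (E (T k.val)) := rfl
    rw [this]
    simp only [hA]
    split_ifs <;> omega
  · -- class 3 indices
    intro k hk1 hk2
    have hTk : T k.val = k.val + i2 + 2 - n := by
      simp only [hT]
      rw [if_neg (by omega), if_neg (by omega), if_neg hk2]
    have hple : F i1 ≤ T k.val := by rw [hFi1]; omega
    have hge : i1 ≤ E (T k.val) := hEge _ _ hple
    have hlt : E (T k.val) < n := hElt _ (hTlt _ k.isLt)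
    have : (j k).val = A (E (T k.val)) := rfl
    rw [this]
    simp only [hA]
    split_ifs <;> omega
  · -- the multiset equality
    have hTinj : ∀ k l, k < n → l < n → T k = T l → k = l := by
      intro k l hk hl h; simp only [hT] at h; split_ifs at h <;> omega
    set τ : Fin n → Fin n := fun k => ⟨T k.val, hTlt _ k.isLt⟩ with hτ
    have hτbij : Function.Bijective τ :=
      Finite.injective_iff_bijective.mp
        (fun x y h => Fin.ext (hTinj _ _ x.isLt y.isLt (congrArg Fin.val h)))
    funext m
    rw [Finset.sum_apply]
    have := aux_count j m
    rw [Finset.sum_apply] at this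
    rw [this]
    set em : Fin n := ρe.symm m with hem
    have hjm : ∀ k : Fin n, j k = m ↔ E (T k.val) = em.val := by
      intro k
      constructor
      · intro h
        have : ρe (⟨E (T k.val), hElt _ (hTlt _ k.isLt)⟩ : Fin n) = m := h
        have h2 : (⟨E (T k.val), hElt _ (hTlt _ k.isLt)⟩ : Fin n) = ρe.symm m := by
          rw [← this, Equiv.symm_apply_apply]
        exact congrArg Fin.val h2
      · intro h
        have h2 : (⟨E (T k.val), hElt _ (hTlt _ k.isLt)⟩ : Fin n) = em := Fin.ext h
        show ρe _ = m
        rw [h2, hem, Equiv.apply_symm_apply]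
    have step1 : (Finset.univ.filter fun k => j k = m).card
        = (Finset.univ.filter fun p : Fin n => E p.val = em.val).card := by
      apply Finset.card_nbij τ
      · intro k hk
        simp only [Finset.mem_coe, Finset.mem_filter, Finset.mem_univ, true_and] at hk ⊢
        rw [← (hjm k)]
        exact hk
      · intro x _ y _ h; exact hτbij.injective h
      · intro p hp
        simp only [Finset.coe_filter, Finset.mem_univ, true_and, Set.mem_setOf_eq] at hp
        obtain ⟨k, rfl⟩ := hτbij.surjective p
        refine ⟨k, ?_, rfl⟩
        simp only [Finset.coe_filter, Finset.mem_univ, true_and, Set.mem_setOf_eq]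
        rw [hjm k]
        exact hp
    rw [step1, aux_cardP (fun p => E p = em.val), hfiber em.val em.isLt]
    simp only [hbdef]
    rw [dif_pos em.isLt]
    show α m = α (ρe em)
    rw [hem, Equiv.apply_symm_apply]

theorem stmt10 (n i1 i2 t2 : ℕ) (hn : 3 ≤ n) (hi1a : 2 ≤ i1) (hi1b : i1 ≤ n - 2)
    (ht2a : i1 + 1 ≤ t2) (ht2b : t2 ≤ n - 1)
    (hcyc : n < i2 + t2) (hi2a : n - t2 + i1 ≤ i2)
    (C : Fin n → Set (Fin n))
    (hC : ∀ k : Fin n,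
      C k = if k.val < i1 ∨ k.val = n - 1 then (Set.univ : Set (Fin n))
            else if k.val < i1 + n - i2 - 1 then
              {m : Fin n | ¬ (t2 ≤ m.val ∨ m.val < i2 + t2 - n)}
            else {m : Fin n | i1 ≤ m.val}) :
    {α : Fin n → ℕ | ∃ j : Fin n → Fin n, (∀ k, j k ∈ C k) ∧ α = ∑ k, Pi.single (j k) 1} =
    {α : Fin n → ℕ | ∑ k, α k = n ∧
      ∑ k ∈ Finset.univ.filter (fun m : Fin n => m.val < i1), α k ≤ i1 + 1 ∧
      ∑ k ∈ Finset.univ.filter (fun m : Fin n => m.val < i2 + t2 - n ∨ t2 ≤ m.val), α k ≤ i2 + 1} := by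
  have hb1 : i1 + 2 ≤ n := by omega
  have hb2 : t2 + 1 ≤ n := by omega
  have hb3 : i1 + 1 ≤ i2 := by omega
  have hb4 : i1 ≤ i2 + t2 - n := by omega
  ext α
  simp only [Set.mem_setOf_eq]
  constructor
  · rintro ⟨j, hj, rfl⟩
    have hclass : ∀ k : Fin n, (j k).val < i1 → (k.val < i1 ∨ k.val = n - 1) := by
      intro k h
      by_contra hk
      have hjk := hj k
      rw [hC k, if_neg hk] at hjk
      by_cases h2 : k.val < i1 + n - i2 - 1
      · rw [if_pos h2] at hjk
        simp only [Set.mem_setOf_eq] at hjk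
        omega
      · rw [if_neg h2] at hjk
        simp only [Set.mem_setOf_eq] at hjk
        omega
    have hclass2 : ∀ k : Fin n, i1 ≤ k.val → k.val < i1 + n - i2 - 1 →
        (i2 + t2 - n ≤ (j k).val ∧ (j k).val < t2) := by
      intro k h1 h2
      have hjk := hj k
      rw [hC k, if_neg (by omega), if_pos h2] at hjk
      simp only [Set.mem_setOf_eq] at hjk
      omega
    refine ⟨?_, ?_, ?_⟩
    · rw [show (∑ k, (∑ k', Pi.single (j k') (1:ℕ) : Fin n → ℕ) k)
          = ∑ m ∈ Finset.univ, (∑ k', Pi.single (j k') (1:ℕ) : Fin n → ℕ) m from rfl,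
        aux_sum j Finset.univ]
      simp
    · rw [aux_sum j]
      calc (Finset.univ.filter fun k =>
            j k ∈ Finset.univ.filter (fun m : Fin n => m.val < i1)).card
          ≤ (Finset.univ.filter fun k : Fin n => k.val < i1 ∨ k.val = n - 1).card := by
            apply Finset.card_le_card
            refine Finset.monotone_filter_right _ ?_
            intro k _ h
            exact hclass k (by simpa using h)
        _ = i1 + 1 := by
            rw [aux_cardP (fun x => x < i1 ∨ x = n - 1)]
            have : (Finset.range n).filter (fun x => x < i1 ∨ x = n - 1)
                = insert (n-1) (Finset.range i1) := by
              ext x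
              simp only [Finset.mem_filter, Finset.mem_range, Finset.mem_insert]
              omega
            rw [this, Finset.card_insert_of_notMem (by simp; omega), Finset.card_range]
    · rw [aux_sum j]
      by_cases hcase : i2 + 1 ≤ n
      · calc (Finset.univ.filter fun k => j k ∈ Finset.univ.filter
              (fun m : Fin n => m.val < i2 + t2 - n ∨ t2 ≤ m.val)).card
            ≤ (Finset.univ.filter fun k : Fin n =>
                ¬(i1 ≤ k.val ∧ k.val < i1 + n - i2 - 1)).card := by
              apply Finset.card_le_card
              refine Finset.monotone_filter_right _ ?_
              intro k _ hmem
              simp only [Finset.mem_filter, Finset.mem_univ, true_and] at hmem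
              rintro ⟨hk1, hk2⟩
              have := hclass2 k hk1 hk2
              omega
          _ ≤ i2 + 1 := by
              rw [aux_cardP (fun x => ¬(i1 ≤ x ∧ x < i1 + n - i2 - 1))]
              have : (Finset.range n).filter (fun x => ¬(i1 ≤ x ∧ x < i1 + n - i2 - 1))
                  = Finset.range i1 ∪ Finset.Ico (i1 + n - i2 - 1) n := by
                ext x
                simp only [Finset.mem_filter, Finset.mem_range, Finset.mem_union,
                  Finset.mem_Ico]
                omega
              rw [this, Finset.card_union_of_disjoint, Finset.card_range, Nat.card_Ico]
              · omega
              · simp only [Finset.disjoint_left, Finset.mem_range, Finset.mem_Ico]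
                omega
      · calc _ ≤ (Finset.univ : Finset (Fin n)).card := Finset.card_filter_le _ _
          _ = n := by simp
          _ ≤ i2 + 1 := by omega
  · rintro ⟨hs, ha, hb⟩
    by_cases hcase : i2 + 1 ≤ n
    · obtain ⟨j, hj2, hj3, hval⟩ :=
        aux_backward hn hi1a hb1 ht2a hb2 hcyc hi2a hcase α hs ha hb
      refine ⟨j, ?_, hval⟩
      intro k
      rw [hC k]
      by_cases hk1 : k.val < i1 ∨ k.val = n - 1
      · rw [if_pos hk1]; trivial
      · rw [if_neg hk1]
        by_cases hk2 : k.val < i1 + n - i2 - 1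
        · rw [if_pos hk2]
          have := hj2 k hk1 hk2
          simp only [Set.mem_setOf_eq]
          omega
        · rw [if_neg hk2]
          exact hj3 k hk1 hk2
    · have hb' : ∑ k ∈ Finset.univ.filter
          (fun m : Fin n => m.val < (n-1) + t2 - n ∨ t2 ≤ m.val), α k ≤ (n-1) + 1 := by
        calc _ ≤ ∑ k, α k := Finset.sum_le_sum_of_subset (Finset.filter_subset _ _)
          _ = n := hs
          _ ≤ (n-1) + 1 := by omega
      obtain ⟨j, hj2, hj3, hval⟩ :=
        aux_backward hn hi1a hb1 ht2a hb2 (show n < (n-1) + t2 by omega)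
          (show n - t2 + i1 ≤ n - 1 by omega) (by omega) α hs ha hb'
      refine ⟨j, ?_, hval⟩
      intro k
      rw [hC k]
      by_cases hk1 : k.val < i1 ∨ k.val = n - 1
      · rw [if_pos hk1]; trivial
      · rw [if_neg hk1]
        rw [if_neg (by omega)]
        exact hj3 k hk1 (by omega)
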